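/- Consider the noisy saddle with parameters a₁, a₂ > 0 and b₁, b₂ ∈ ℝ, driven by paths w¹, w² of linear growth, and let ε₁, ε₂ ∈ ℝ. If ε₁ ≠ 0 then the Euclidean distance ‖( φ_{a₁,b₁}(t, w¹, x̃ + ε₁), ψ_{a₂,b₂}(t, w², ỹ + ε₂) ) − ( x̃(θ_t w¹), ỹ(θ_t w²) )‖ is bounded below by |ε₁| e^{a₁ t} and tends to +∞ as t → +∞; if ε₂ ≠ 0 then this distance is bounded below by |ε₂| e^{−a₂ t} and tends to +∞ as t → −∞. -/

import Mathlib

open MeasureTheory Filter Topology Set Real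

/-- The pathwise solution operator `φ_{a,b}` of the expanding component `dX = aX dt + b dW`. -/
noncomputable def phiSol (a b t : ℝ) (w : ℝ → ℝ) (x : ℝ) : ℝ :=
  Real.exp (a * t) * x + b * w t +
    a * b * Real.exp (a * t) * ∫ s in (0 : ℝ)..t, Real.exp (-a * s) * w s

/-- The pathwise solution operator `ψ_{a,b}` of the contracting component `dY = -aY dt + b dW`. -/
noncomputable def psiSol (a b t : ℝ) (w : ℝ → ℝ) (y : ℝ) : ℝ :=
  Real.exp (-a * t) * y + b * w t -
    a * b * Real.exp (-a * t) * ∫ s in (0 : ℝ)..t, Real.exp (a * s) * w s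

/-- The shift `θ_t w` of a path `w`: `(θ_t w)(s) = w(t + s) - w(t)`. -/
def shiftPath (t : ℝ) (w : ℝ → ℝ) : ℝ → ℝ := fun s => w (t + s) - w t

/-- `x̃_{a,b}(w) = -a b ∫₀^∞ e^{-a s} w(s) ds`. -/
noncomputable def xStat (a b : ℝ) (w : ℝ → ℝ) : ℝ :=
  -(a * b) * ∫ s in Set.Ioi (0 : ℝ), Real.exp (-a * s) * w s

/-- `ỹ_{a,b}(w) = -a b ∫_{-∞}^0 e^{a s} w(s) ds`. -/
noncomputable def yStat (a b : ℝ) (w : ℝ → ℝ) : ℝ :=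
  -(a * b) * ∫ s in Set.Iio (0 : ℝ), Real.exp (a * s) * w s

/-- The Euclidean distance at time `t` between the solution of the noisy saddle starting
at the perturbed point `(x̃ + ε₁, ỹ + ε₂)` and the stationary orbit. -/
noncomputable def saddleDist (a₁ b₁ a₂ b₂ : ℝ) (w₁ w₂ : ℝ → ℝ) (ε₁ ε₂ t : ℝ) : ℝ :=
  Real.sqrt
    ((phiSol a₁ b₁ t w₁ (xStat a₁ b₁ w₁ + ε₁) - xStat a₁ b₁ (shiftPath t w₁)) ^ 2 +
      (psiSol a₂ b₂ t w₂ (yStat a₂ b₂ w₂ + ε₂) - yStat a₂ b₂ (shiftPath t w₂)) ^ 2)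


private lemma saddle_intOn (a : ℝ) (ha : 0 < a) (w : ℝ → ℝ) (hw : Continuous w) (C : ℝ)
    (hg : ∀ s, |w s| ≤ C * (1 + |s|)) (c : ℝ) :
    IntegrableOn (fun s => Real.exp (-a * s) * w s) (Set.Ioi c) := by
  apply integrable_of_isBigO_exp_neg (half_pos ha)
    ((Real.continuous_exp.comp (continuous_const.mul continuous_id)).mul hw).continuousOn
  have h1 : Tendsto (fun x : ℝ => C * Real.exp (-(a/2) * x) + C * (x * Real.exp (-(a/2) * x)))
      atTop (𝓝 (C * 0 + C * 0)) := by
    refine Tendsto.add (Tendsto.const_mul _ ?_) (Tendsto.const_mul _ ?_)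
    · exact (Real.tendsto_exp_neg_atTop_nhds_zero).comp
        (tendsto_id.const_mul_atTop (half_pos ha)) |>.congr (fun x => by simp [neg_mul])
    · simpa [Real.rpow_one] using tendsto_rpow_mul_exp_neg_mul_atTop_nhds_zero 1 (a/2) (half_pos ha)
  rw [mul_zero, add_zero] at h1
  apply Asymptotics.IsBigO.of_bound 1
  filter_upwards [h1.eventually (eventually_le_nhds (by norm_num : (0:ℝ) < 1)),
    eventually_ge_atTop (0:ℝ)] with x hx hx0
  have hb : |w x| ≤ C * (1 + x) := by simpa [abs_of_nonneg hx0] using hg x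
  have : |Real.exp (-a*x) * w x| ≤ (C * Real.exp (-(a/2)*x) + C * (x * Real.exp (-(a/2)*x))) * Real.exp (-(a/2)*x) := by
    rw [abs_mul, abs_of_pos (Real.exp_pos _)]
    have h2 : Real.exp (-a*x) = Real.exp (-(a/2)*x) * Real.exp (-(a/2)*x) := by
      rw [← Real.exp_add]; ring_nf
    rw [h2]
    calc Real.exp (-(a/2)*x) * Real.exp (-(a/2)*x) * |w x|
        ≤ Real.exp (-(a/2)*x) * Real.exp (-(a/2)*x) * (C * (1+x)) := by
          apply mul_le_mul_of_nonneg_left hb (by positivity)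
      _ = (C * Real.exp (-(a/2)*x) + C * (x * Real.exp (-(a/2)*x))) * Real.exp (-(a/2)*x) := by ring
  calc ‖Real.exp (-a*x) * w x‖ = |Real.exp (-a*x) * w x| := rfl
    _ ≤ _ := this
    _ ≤ 1 * Real.exp (-(a/2)*x) := by
        apply mul_le_mul_of_nonneg_right hx (Real.exp_pos _).le
    _ = 1 * ‖Real.exp (-(a/2)*x)‖ := by rw [Real.norm_eq_abs, abs_of_pos (Real.exp_pos _)]

private lemma saddle_trans (t : ℝ) (f : ℝ → ℝ) :
    ∫ s in Set.Ioi (0:ℝ), f (t + s) = ∫ u in Set.Ioi t, f u := by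
  have h := (measurePreserving_add_left (volume : Measure ℝ) t).setIntegral_preimage_emb
    (MeasurableEquiv.addLeft t).measurableEmbedding f (Set.Ioi t)
  simpa using h

private lemma saddle_split (t : ℝ) (f : ℝ → ℝ) (h : ∀ c : ℝ, IntegrableOn f (Set.Ioi c)) :
    ∫ s in Set.Ioi (0:ℝ), f s = (∫ s in (0:ℝ)..t, f s) + ∫ s in Set.Ioi t, f s := by
  rcases le_or_gt 0 t with ht | ht
  · rw [intervalIntegral.integral_of_le ht,
      ← setIntegral_union (Set.Ioc_disjoint_Ioi le_rfl) measurableSet_Ioi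
        ((h 0).mono_set Set.Ioc_subset_Ioi_self) (h t), Set.Ioc_union_Ioi_eq_Ioi ht]
  · rw [intervalIntegral.integral_of_ge ht.le]
    have := setIntegral_union (Set.Ioc_disjoint_Ioi (le_refl (0:ℝ))) measurableSet_Ioi
        ((h t).mono_set Set.Ioc_subset_Ioi_self) (h 0)
    rw [Set.Ioc_union_Ioi_eq_Ioi ht.le] at this
    rw [this]; ring

private lemma saddle_exp_int (a : ℝ) (ha : 0 < a) :
    ∫ s in Set.Ioi (0:ℝ), Real.exp (-a * s) = 1 / a := by
  have := integral_Ioi_of_hasDerivAt_of_tendsto (f := fun x => -Real.exp (-a*x) / a)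
    (f' := fun x => Real.exp (-a*x)) (a := 0) (m := 0)
    (((Real.continuous_exp.comp (continuous_const.mul continuous_id)).neg.div_const a).continuousWithinAt) (fun x _ => ?_) (exp_neg_integrableOn_Ioi 0 ha) ?_
  · rw [this]; field_simp; simp
  · have h3 := (((hasDerivAt_id x).const_mul (-a)).exp.neg).div_const a
    simp only [id_eq] at h3
    exact h3.congr_deriv (by rw [eq_comm, eq_div_iff ha.ne']; ring)
  · have : Tendsto (fun x => Real.exp (-a * x)) atTop (𝓝 0) :=
      (Real.tendsto_exp_neg_atTop_nhds_zero).comp (tendsto_id.const_mul_atTop ha) |>.congr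
        (fun x => by simp [neg_mul])
    simpa using ((this.neg).div_const a)

lemma phi_key (a b : ℝ) (ha : 0 < a) (w : ℝ → ℝ) (hw : Continuous w) (C : ℝ) (hC : 0 ≤ C)
    (hg : ∀ s, |w s| ≤ C * (1 + |s|)) (ε t : ℝ) :
    phiSol a b t w (xStat a b w + ε) - xStat a b (shiftPath t w) = ε * Real.exp (a * t) := by
  set f : ℝ → ℝ := fun s => Real.exp (-a * s) * w s with hf
  have hInt : ∀ c : ℝ, IntegrableOn f (Set.Ioi c) := saddle_intOn a ha w hw C hg
  -- integrability of the shifted integrand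
  have hw' : Continuous (fun s => w (t + s)) := hw.comp (continuous_const.add continuous_id)
  have hg' : ∀ s, |w (t + s)| ≤ (C * (1 + |t|)) * (1 + |s|) := by
    intro s
    calc |w (t + s)| ≤ C * (1 + |t + s|) := hg _
      _ ≤ C * (1 + (|t| + |s|)) := by
          apply mul_le_mul_of_nonneg_left _ hC
          linarith [abs_add_le t s]
      _ ≤ (C * (1 + |t|)) * (1 + |s|) := by nlinarith [mul_nonneg (mul_nonneg hC (abs_nonneg t)) (abs_nonneg s)]
  have hshift_int : IntegrableOn (fun s => Real.exp (-a * s) * w (t + s)) (Set.Ioi (0:ℝ)) :=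
    saddle_intOn a ha _ hw' _ hg' 0
  -- translation identity
  have htrans : ∫ s in Set.Ioi (0:ℝ), Real.exp (-a * s) * w (t + s)
      = Real.exp (a * t) * ∫ u in Set.Ioi t, f u := by
    rw [← saddle_trans t f, ← integral_const_mul]
    apply setIntegral_congr_fun measurableSet_Ioi
    intro s _
    show Real.exp (-a * s) * w (t + s) = Real.exp (a*t) * (Real.exp (-a * (t+s)) * w (t+s))
    rw [← mul_assoc, ← Real.exp_add]
    ring_nf
  have hconstint : IntegrableOn (fun s => Real.exp (-a * s) * w t) (Set.Ioi (0:ℝ)) :=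
    (exp_neg_integrableOn_Ioi 0 ha).mul_const (w t)
  have hxs : xStat a b (shiftPath t w)
      = -(a*b) * (Real.exp (a*t) * (∫ u in Set.Ioi t, f u) - (1/a) * w t) := by
    unfold xStat shiftPath
    congr 1
    rw [show (fun s => Real.exp (-a*s) * (w (t+s) - w t)) = fun s =>
      (Real.exp (-a*s) * w (t+s)) - (Real.exp (-a*s) * w t) from funext fun s => by ring]
    rw [integral_sub hshift_int hconstint, htrans, integral_mul_const, saddle_exp_int a ha]
  rw [hxs]
  unfold phiSol xStat
  have hsplit := saddle_split t f hInt
  have hiv : (∫ s in (0:ℝ)..t, Real.exp (-a * s) * w s)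
      = (∫ s in Set.Ioi (0:ℝ), f s) - ∫ s in Set.Ioi t, f s := by
    simp only [hf]
    simp only [hf] at hsplit
    linarith [hsplit]
  rw [hiv]
  simp only [hf]
  field_simp
  ring


lemma psi_key (a b : ℝ) (ha : 0 < a) (w : ℝ → ℝ) (hw : Continuous w) (C : ℝ) (hC : 0 ≤ C)
    (hg : ∀ s, |w s| ≤ C * (1 + |s|)) (ε t : ℝ) :
    psiSol a b t w (yStat a b w + ε) - yStat a b (shiftPath t w) = ε * Real.exp (-a * t) := by
  have hy : ∀ v : ℝ → ℝ, yStat a b v = xStat a b (fun s => v (-s)) := by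
    intro v
    unfold yStat xStat
    congr 1
    have h := integral_comp_neg_Ioi (0:ℝ) (fun s => Real.exp (a * s) * v s)
    simp only [neg_zero] at h
    rw [← integral_Iic_eq_integral_Iio, ← h]
    apply setIntegral_congr_fun measurableSet_Ioi
    intro s _
    simp [mul_neg, neg_mul]
  have hI : (∫ s in (0:ℝ)..(-t), Real.exp (-a * s) * w (-s))
      = -∫ s in (0:ℝ)..t, Real.exp (a * s) * w s := by
    have h := intervalIntegral.integral_comp_neg (a := (0:ℝ)) (b := -t)
      (fun s => Real.exp (a * s) * w s)
    simp only [neg_neg, neg_zero] at h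
    rw [← intervalIntegral.integral_symm, ← h]
    apply intervalIntegral.integral_congr
    intro s _
    simp [mul_neg, neg_mul]
  have hpsi : ∀ y : ℝ, psiSol a b t w y = phiSol a b (-t) (fun s => w (-s)) y := by
    intro y
    unfold psiSol phiSol
    rw [hI]
    simp only [neg_neg, mul_neg, neg_mul]
    ring
  have hshift : shiftPath (-t) (fun s => w (-s)) = fun s => shiftPath t w (-s) := by
    funext s
    simp only [shiftPath]
    rw [show -(-t + s) = t + -s by ring, neg_neg]
  have hgrow : ∀ s, |w (-s)| ≤ C * (1 + |s|) := fun s => by simpa [abs_neg] using hg (-s)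
  have hcont : Continuous (fun s => w (-s)) := hw.comp continuous_neg
  calc psiSol a b t w (yStat a b w + ε) - yStat a b (shiftPath t w)
      = phiSol a b (-t) (fun s => w (-s)) (xStat a b (fun s => w (-s)) + ε)
        - xStat a b (shiftPath (-t) (fun s => w (-s))) := by
        rw [hpsi, hy w, hy (shiftPath t w), hshift]
    _ = ε * Real.exp (a * (-t)) := phi_key a b ha _ hcont C hC hgrow ε (-t)
    _ = ε * Real.exp (-a * t) := by rw [mul_neg, neg_mul]

/-- **Exponential dichotomy for the noisy saddle.** If `ε₁ ≠ 0` the Euclidean distance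
to the stationary orbit is bounded below by `|ε₁| e^{a₁ t}` and tends to `+∞` as
`t → +∞`; if `ε₂ ≠ 0` it is bounded below by `|ε₂| e^{-a₂ t}` and tends to `+∞`
as `t → -∞`. -/
theorem noisy_saddle_exponential_dichotomy
    (a₁ a₂ : ℝ) (ha₁ : 0 < a₁) (ha₂ : 0 < a₂) (b₁ b₂ : ℝ)
    (w₁ w₂ : ℝ → ℝ) (hw₁ : Continuous w₁) (hw₁0 : w₁ 0 = 0)
    (hw₂ : Continuous w₂) (hw₂0 : w₂ 0 = 0)
    (C₁ : ℝ) (hC₁ : 0 ≤ C₁) (hg₁ : ∀ s : ℝ, |w₁ s| ≤ C₁ * (1 + |s|))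
    (C₂ : ℝ) (hC₂ : 0 ≤ C₂) (hg₂ : ∀ s : ℝ, |w₂ s| ≤ C₂ * (1 + |s|))
    (ε₁ ε₂ : ℝ) :
    (ε₁ ≠ 0 →
      (∀ t : ℝ, |ε₁| * Real.exp (a₁ * t) ≤ saddleDist a₁ b₁ a₂ b₂ w₁ w₂ ε₁ ε₂ t) ∧
        Tendsto (fun t => saddleDist a₁ b₁ a₂ b₂ w₁ w₂ ε₁ ε₂ t) atTop atTop) ∧
    (ε₂ ≠ 0 →
      (∀ t : ℝ, |ε₂| * Real.exp (-a₂ * t) ≤ saddleDist a₁ b₁ a₂ b₂ w₁ w₂ ε₁ ε₂ t) ∧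
        Tendsto (fun t => saddleDist a₁ b₁ a₂ b₂ w₁ w₂ ε₁ ε₂ t) atBot atTop) := by
  have hx : ∀ t, phiSol a₁ b₁ t w₁ (xStat a₁ b₁ w₁ + ε₁) - xStat a₁ b₁ (shiftPath t w₁)
      = ε₁ * Real.exp (a₁ * t) := fun t => phi_key a₁ b₁ ha₁ w₁ hw₁ C₁ hC₁ hg₁ ε₁ t
  have hy : ∀ t, psiSol a₂ b₂ t w₂ (yStat a₂ b₂ w₂ + ε₂) - yStat a₂ b₂ (shiftPath t w₂)
      = ε₂ * Real.exp (-a₂ * t) := fun t => psi_key a₂ b₂ ha₂ w₂ hw₂ C₂ hC₂ hg₂ ε₂ t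
  have hd : ∀ t, saddleDist a₁ b₁ a₂ b₂ w₁ w₂ ε₁ ε₂ t
      = Real.sqrt ((ε₁ * Real.exp (a₁ * t)) ^ 2 + (ε₂ * Real.exp (-a₂ * t)) ^ 2) := by
    intro t; unfold saddleDist; rw [hx t, hy t]
  have hb1 : ∀ t, |ε₁| * Real.exp (a₁ * t) ≤ saddleDist a₁ b₁ a₂ b₂ w₁ w₂ ε₁ ε₂ t := by
    intro t
    rw [hd t]
    have h1 : |ε₁| * Real.exp (a₁ * t) = Real.sqrt ((ε₁ * Real.exp (a₁ * t)) ^ 2) := by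
      rw [Real.sqrt_sq_eq_abs, abs_mul, abs_of_pos (Real.exp_pos _)]
    rw [h1]
    exact Real.sqrt_le_sqrt (le_add_of_nonneg_right (sq_nonneg _))
  have hb2 : ∀ t, |ε₂| * Real.exp (-a₂ * t) ≤ saddleDist a₁ b₁ a₂ b₂ w₁ w₂ ε₁ ε₂ t := by
    intro t
    rw [hd t]
    have h1 : |ε₂| * Real.exp (-a₂ * t) = Real.sqrt ((ε₂ * Real.exp (-a₂ * t)) ^ 2) := by
      rw [Real.sqrt_sq_eq_abs, abs_mul, abs_of_pos (Real.exp_pos _)]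
    rw [h1]
    exact Real.sqrt_le_sqrt (le_add_of_nonneg_left (sq_nonneg _))
  constructor
  · intro hε
    refine ⟨hb1, ?_⟩
    apply tendsto_atTop_mono hb1
    have h2 : Tendsto (fun t => Real.exp (a₁ * t)) atTop atTop :=
      Real.tendsto_exp_atTop.comp (tendsto_id.const_mul_atTop ha₁)
    exact Tendsto.const_mul_atTop (abs_pos.mpr hε) h2
  · intro hε
    refine ⟨hb2, ?_⟩
    apply tendsto_atTop_mono hb2
    have h1 : Tendsto (fun t : ℝ => -a₂ * t) atBot atTop := by
      have h0 : Tendsto (fun t : ℝ => a₂ * (-t)) atBot atTop :=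
        Tendsto.const_mul_atTop ha₂ tendsto_neg_atBot_atTop
      exact h0.congr (fun t => by ring)
    have h2 : Tendsto (fun t => Real.exp (-a₂ * t)) atBot atTop :=
      Real.tendsto_exp_atTop.comp h1
    exact Tendsto.const_mul_atTop (abs_pos.mpr hε) h2
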